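/- Theorem 2 (the glass entropy stays above the supercooled-liquid entropy). Let T_0 > 0, a ∈ ℝ, and L ∈ ℝ. Let S, E : ℝ → ℝ be differentiable on [a, ∞) and T : ℝ → ℝ with T(t) > 0 for all t ≥ a. Assume for every t ≥ a: E'(t) < 0, (1/T(t) − 1/T_0)·E'(t) > 0, and (T_0 − T(t))·S'(t) > 0, and assume S(t) → L as t → ∞. Then for every t ≥ a: T(t) > T_0, S'(t) < 0, and S(t) > L. -/

import Mathlib

open Set Filter Topology

/-- Theorem 2: during isothermal relaxation at medium temperature T_0, the
instantaneous temperature stays above T_0, the entropy rate is negative, and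
the glass entropy stays strictly above the supercooled-liquid entropy L. -/
theorem glass_entropy_above_supercooled_liquid
    (T0 : ℝ) (hT0 : 0 < T0) (a L : ℝ)
    (S E S' E' T : ℝ → ℝ)
    (hS : ∀ t ∈ Ici a, HasDerivWithinAt S (S' t) (Ici a) t)
    (hE : ∀ t ∈ Ici a, HasDerivWithinAt E (E' t) (Ici a) t)
    (hTpos : ∀ t ∈ Ici a, 0 < T t)
    (hE'neg : ∀ t ∈ Ici a, E' t < 0)
    (hsecond1 : ∀ t ∈ Ici a, (1 / T t - 1 / T0) * E' t > 0)
    (hsecond2 : ∀ t ∈ Ici a, (T0 - T t) * S' t > 0)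
    (hlim : Tendsto S atTop (𝓝 L)) :
    ∀ t ∈ Ici a, T t > T0 ∧ S' t < 0 ∧ S t > L := by
  -- T t > T0 for all t ≥ a
  have hTgt : ∀ t ∈ Ici a, T0 < T t := by
    intro t ht
    have h1 := hsecond1 t ht
    have hE' := hE'neg t ht
    have hfac : 1 / T t - 1 / T0 < 0 := by
      by_contra h
      push_neg at h
      nlinarith
    have : 1 / T t < 1 / T0 := by linarith
    by_contra hc
    push_neg at hc
    have : 1 / T0 ≤ 1 / T t := one_div_le_one_div_of_le (hTpos t ht) hc
    linarith
  -- S' t < 0 for all t ≥ a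
  have hS'neg : ∀ t ∈ Ici a, S' t < 0 := by
    intro t ht
    have h2 := hsecond2 t ht
    have hT := hTgt t ht
    nlinarith
  -- S is strictly antitone on Ici a
  have hanti : StrictAntiOn S (Ici a) := by
    apply strictAntiOn_of_hasDerivWithinAt_neg (convex_Ici a)
      (fun t ht => (hS t ht).continuousWithinAt) (f' := S')
    · intro x hx
      rw [interior_Ici] at hx ⊢
      exact (hS x (mem_Ici.mpr (le_of_lt (mem_Ioi.mp hx)))).mono Ioi_subset_Ici_self
    · intro x hx
      rw [interior_Ici] at hx
      exact hS'neg x (mem_Ici.mpr (le_of_lt (mem_Ioi.mp hx)))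
  intro t ht
  refine ⟨hTgt t ht, hS'neg t ht, ?_⟩
  -- L ≤ S (t+1) since S u ≤ S (t+1) eventually
  have ht1 : t + 1 ∈ Ici a := by simp only [mem_Ici] at *; linarith
  have hLe : L ≤ S (t + 1) := by
    apply le_of_tendsto hlim
    filter_upwards [eventually_ge_atTop (t + 1)] with u hu
    rcases eq_or_lt_of_le hu with h | h
    · rw [h]
    · exact le_of_lt (hanti ht1 (le_trans ht1 hu) h)
  have : S (t + 1) < S t := hanti ht ht1 (by linarith)
  linarith
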